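/- There exist permutations σ₀, σ₁, σ∞, σ_t of a set with 12 elements such that: σ₀ and σ₁ are each a product of 4 disjoint 3-cycles (cycle type {3,3,3,3}); σ∞ is a product of 3 disjoint 4-cycles (cycle type {4,4,4}); σ_t is a transposition (cycle type {2}); the composition σ₀ ∘ σ₁ ∘ σ∞ ∘ σ_t is the identity; and the subgroup generated by σ₀, σ₁, σ∞ acts transitively on the 12 points. -/

import Mathlib

set_option maxRecDepth 10000

open Equiv Equiv.Perm

private def c03 : Equiv.Perm (Fin 12) := ([0,9,11] : List (Fin 12)).formPerm
private def c13 : Equiv.Perm (Fin 12) := ([1,10,4] : List (Fin 12)).formPerm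
private def c23 : Equiv.Perm (Fin 12) := ([2,8,5] : List (Fin 12)).formPerm
private def c33 : Equiv.Perm (Fin 12) := ([3,7,6] : List (Fin 12)).formPerm
private def d03 : Equiv.Perm (Fin 12) := ([0,7,5] : List (Fin 12)).formPerm
private def d13 : Equiv.Perm (Fin 12) := ([1,6,4] : List (Fin 12)).formPerm
private def d23 : Equiv.Perm (Fin 12) := ([2,10,9] : List (Fin 12)).formPerm
private def d33 : Equiv.Perm (Fin 12) := ([3,11,8] : List (Fin 12)).formPerm
private def e0 : Equiv.Perm (Fin 12) := ([0,3,1,6] : List (Fin 12)).formPerm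
private def e1 : Equiv.Perm (Fin 12) := ([2,7,10,4] : List (Fin 12)).formPerm
private def e2 : Equiv.Perm (Fin 12) := ([5,11,8,9] : List (Fin 12)).formPerm
private def tt : Equiv.Perm (Fin 12) := ([7,11] : List (Fin 12)).formPerm

private lemma cyc_of_list (l : List (Fin 12)) (hl : l.Nodup) (hn : 2 ≤ l.length) :
    l.formPerm.cycleType = {l.formPerm.support.card} :=
  (List.isCycle_formPerm hl hn).cycleType

private lemma disj_mul {a b c : Equiv.Perm (Fin 12)}
    (hab : Equiv.Perm.Disjoint a b) (hac : Equiv.Perm.Disjoint a c) :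
    Equiv.Perm.Disjoint a (b * c) := hab.mul_right hac

/-- Existence of permutations encoding a degree 12 branched covering of the projective line
realizing the Hurwitz data (3,3,4) of the paper, with one free simple branch point:
cycle types of σ₀, σ₁, σ∞ are as prescribed, σ_t is a transposition, the composition
σ₀ ∘ σ₁ ∘ σ∞ ∘ σ_t is the identity, and ⟨σ₀, σ₁, σ∞⟩ is transitive on the 12 points. -/
theorem stmt14 :
    ∃ σ₀ σ₁ σ_inf σ_t : Equiv.Perm (Fin 12),
      σ₀.cycleType = (Multiset.replicate 4 3) ∧
      σ₁.cycleType = (Multiset.replicate 4 3) ∧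
      σ_inf.cycleType = {4, 4, 4} ∧
      σ_t.cycleType = {2} ∧
      σ₀ * σ₁ * σ_inf * σ_t = 1 ∧
      ∀ i j : Fin 12, ∃ g ∈ Subgroup.closure ({σ₀, σ₁, σ_inf} : Set (Equiv.Perm (Fin 12))),
        g i = j := by
  refine ⟨c03 * c13 * c23 * c33, d03 * d13 * d23 * d33, e0 * e1 * e2, tt, ?_, ?_, ?_, ?_, ?_, ?_⟩
  · have h1 : c03.cycleType = {3} := by
      have := cyc_of_list [0,9,11] (by decide) (by decide)
      rwa [show ([0,9,11] : List (Fin 12)).formPerm.support.card = 3 by decide] at this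
    have h2 : c13.cycleType = {3} := by
      have := cyc_of_list [1,10,4] (by decide) (by decide)
      rwa [show ([1,10,4] : List (Fin 12)).formPerm.support.card = 3 by decide] at this
    have h3 : c23.cycleType = {3} := by
      have := cyc_of_list [2,8,5] (by decide) (by decide)
      rwa [show ([2,8,5] : List (Fin 12)).formPerm.support.card = 3 by decide] at this
    have h4 : c33.cycleType = {3} := by
      have := cyc_of_list [3,7,6] (by decide) (by decide)
      rwa [show ([3,7,6] : List (Fin 12)).formPerm.support.card = 3 by decide] at this
    have d12 : Equiv.Perm.Disjoint c03 c13 := Equiv.Perm.disjoint_iff_eq_or_eq.mpr (by decide)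
    have d123 : Equiv.Perm.Disjoint (c03 * c13) c23 := Equiv.Perm.disjoint_iff_eq_or_eq.mpr (by decide)
    have d1234 : Equiv.Perm.Disjoint (c03 * c13 * c23) c33 := Equiv.Perm.disjoint_iff_eq_or_eq.mpr (by decide)
    rw [d1234.cycleType_mul, d123.cycleType_mul, d12.cycleType_mul, h1, h2, h3, h4]
    decide
  · have h1 : d03.cycleType = {3} := by
      have := cyc_of_list [0,7,5] (by decide) (by decide)
      rwa [show ([0,7,5] : List (Fin 12)).formPerm.support.card = 3 by decide] at this
    have h2 : d13.cycleType = {3} := by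
      have := cyc_of_list [1,6,4] (by decide) (by decide)
      rwa [show ([1,6,4] : List (Fin 12)).formPerm.support.card = 3 by decide] at this
    have h3 : d23.cycleType = {3} := by
      have := cyc_of_list [2,10,9] (by decide) (by decide)
      rwa [show ([2,10,9] : List (Fin 12)).formPerm.support.card = 3 by decide] at this
    have h4 : d33.cycleType = {3} := by
      have := cyc_of_list [3,11,8] (by decide) (by decide)
      rwa [show ([3,11,8] : List (Fin 12)).formPerm.support.card = 3 by decide] at this
    have d12 : Equiv.Perm.Disjoint d03 d13 := Equiv.Perm.disjoint_iff_eq_or_eq.mpr (by decide)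
    have d123 : Equiv.Perm.Disjoint (d03 * d13) d23 := Equiv.Perm.disjoint_iff_eq_or_eq.mpr (by decide)
    have d1234 : Equiv.Perm.Disjoint (d03 * d13 * d23) d33 := Equiv.Perm.disjoint_iff_eq_or_eq.mpr (by decide)
    rw [d1234.cycleType_mul, d123.cycleType_mul, d12.cycleType_mul, h1, h2, h3, h4]
    decide
  · have h1 : e0.cycleType = {4} := by
      have := cyc_of_list [0,3,1,6] (by decide) (by decide)
      rwa [show ([0,3,1,6] : List (Fin 12)).formPerm.support.card = 4 by decide] at this
    have h2 : e1.cycleType = {4} := by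
      have := cyc_of_list [2,7,10,4] (by decide) (by decide)
      rwa [show ([2,7,10,4] : List (Fin 12)).formPerm.support.card = 4 by decide] at this
    have h3 : e2.cycleType = {4} := by
      have := cyc_of_list [5,11,8,9] (by decide) (by decide)
      rwa [show ([5,11,8,9] : List (Fin 12)).formPerm.support.card = 4 by decide] at this
    have d12 : Equiv.Perm.Disjoint e0 e1 := Equiv.Perm.disjoint_iff_eq_or_eq.mpr (by decide)
    have d123 : Equiv.Perm.Disjoint (e0 * e1) e2 := Equiv.Perm.disjoint_iff_eq_or_eq.mpr (by decide)
    rw [d123.cycleType_mul, d12.cycleType_mul, h1, h2, h3]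
    decide
  · have := cyc_of_list [7,11] (by decide) (by decide)
    rwa [show ([7,11] : List (Fin 12)).formPerm.support.card = 2 by decide] at this
  · exact Equiv.ext (by decide)
  · intro i j
    set p0 : Equiv.Perm (Fin 12) := c03 * c13 * c23 * c33 with hp0def
    set p1 : Equiv.Perm (Fin 12) := d03 * d13 * d23 * d33 with hp1def
    set pi : Equiv.Perm (Fin 12) := e0 * e1 * e2 with hpidef
    set H := Subgroup.closure ({p0, p1, pi} : Set (Equiv.Perm (Fin 12))) with hH
    have hp0 : p0 ∈ H := Subgroup.subset_closure (by simp)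
    have hp1 : p1 ∈ H := Subgroup.subset_closure (by simp)
    have hpi : pi ∈ H := Subgroup.subset_closure (by simp)
    have key : ∀ k : Fin 12, ∃ g ∈ H, g 0 = k := by
      intro k
      match k with
      | 0 => exact ⟨1, one_mem _, by decide⟩
      | 1 => exact ⟨pi * pi, mul_mem hpi hpi, by decide⟩
      | 2 => exact ⟨p1 * p0, mul_mem hp1 hp0, by decide⟩
      | 3 => exact ⟨pi, hpi, by decide⟩
      | 4 => exact ⟨p1 * p0 * p1, mul_mem (mul_mem hp1 hp0) hp1, by decide⟩
      | 5 => exact ⟨pi * p0, mul_mem hpi hp0, by decide⟩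
      | 6 => exact ⟨p0 * p1, mul_mem hp0 hp1, by decide⟩
      | 7 => exact ⟨p1, hp1, by decide⟩
      | 8 => exact ⟨p1 * p0 * p0, mul_mem (mul_mem hp1 hp0) hp0, by decide⟩
      | 9 => exact ⟨p0, hp0, by decide⟩
      | 10 => exact ⟨pi * p1, mul_mem hpi hp1, by decide⟩
      | 11 => exact ⟨p0 * p0, mul_mem hp0 hp0, by decide⟩
    obtain ⟨gi, hgi, hgi0⟩ := key i
    obtain ⟨gj, hgj, hgj0⟩ := key j
    refine ⟨gj * gi⁻¹, mul_mem hgj (inv_mem hgi), ?_⟩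
    have : gi⁻¹ i = 0 := by rw [← hgi0]; simp
    simp [Equiv.Perm.mul_apply, this, hgj0]
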